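/- Let K be a field of characteristic 0 and R = K[x_1,...,x_n]. If f ∈ R is a squarefree product f = f_1 ⋯ f_k of pairwise coprime factors, then a derivation D of R satisfies D(f) ∈ (f) if and only if D(f_i) ∈ (f_i) for every i = 1,...,k. -/

import Mathlib

open MvPolynomial

lemma deriv_prod_aux {K : Type*} [Field K] {R : Type*} [CommRing R] [Algebra K R]
    {ι : Type*} [DecidableEq ι] (D : Derivation K R R) (t : Finset ι) (f : ι → R) :
    D (∏ i ∈ t, f i) = ∑ i ∈ t, (∏ j ∈ t.erase i, f j) * D (f i) := by
  induction t using Finset.induction_on with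
  | empty => simp
  | insert a s h ih =>
    rw [Finset.prod_insert h, D.leibniz, ih, Finset.sum_insert h,
      Finset.erase_insert h, smul_eq_mul, smul_eq_mul, Finset.mul_sum]
    rw [add_comm]
    congr 1
    apply Finset.sum_congr rfl
    intro i hi
    rw [Finset.erase_insert_of_ne (by rintro rfl; exact h hi),
      Finset.prod_insert (fun hmem => h (Finset.mem_of_mem_erase hmem)), mul_assoc]

/-- For a squarefree product `f = f 0 * ⋯ * f (k-1)` of pairwise
coprime (no common nonunit factor) polynomials over a field of characteristic
zero, a derivation `D` is logarithmic for the product iff it is logarithmic for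
each factor. -/
theorem stmt_0 {K : Type*} [Field K] [CharZero K] {n k : ℕ}
    (f : Fin k → MvPolynomial (Fin n) K)
    (hcop : ∀ i j, i ≠ j → ∀ d : MvPolynomial (Fin n) K,
      d ∣ f i → d ∣ f j → IsUnit d)
    (hsf : Squarefree (∏ i, f i))
    (D : Derivation K (MvPolynomial (Fin n) K) (MvPolynomial (Fin n) K)) :
    D (∏ i, f i) ∈ Ideal.span {∏ i, f i} ↔
      ∀ i, D (f i) ∈ Ideal.span {f i} := by
  simp only [Ideal.mem_span_singleton]
  rw [deriv_prod_aux]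
  constructor
  · intro h i
    have hrel : IsRelPrime (f i) (∏ j ∈ Finset.univ.erase i, f j) :=
      IsRelPrime.prod_right fun j hj =>
        fun d hdi hdj => hcop i j (Finset.ne_of_mem_erase hj).symm d hdi hdj
    have hdvd_others : f i ∣ ∑ j ∈ Finset.univ.erase i, (∏ l ∈ Finset.univ.erase j, f l) * D (f j) := by
      apply Finset.dvd_sum
      intro j hj
      exact Dvd.dvd.mul_right
        (Finset.dvd_prod_of_mem _ (Finset.mem_erase.mpr
          ⟨(Finset.ne_of_mem_erase hj).symm, Finset.mem_univ i⟩)) _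
    have hfi : f i ∣ ∑ j, (∏ l ∈ Finset.univ.erase j, f l) * D (f j) :=
      dvd_trans (Finset.dvd_prod_of_mem f (Finset.mem_univ i)) h
    rw [← Finset.add_sum_erase _ _ (Finset.mem_univ i)] at hfi
    have : f i ∣ (∏ l ∈ Finset.univ.erase i, f l) * D (f i) :=
      (dvd_add_right hdvd_others).mp (by rwa [add_comm] at hfi)
    exact hrel.dvd_of_dvd_mul_left this
  · intro h
    apply Finset.dvd_sum
    intro i _
    obtain ⟨c, hc⟩ := h i
    rw [hc, ← mul_assoc]
    exact Dvd.dvd.mul_right (by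
      rw [mul_comm (∏ l ∈ Finset.univ.erase i, f l) (f i), Finset.mul_prod_erase _ _ (Finset.mem_univ i)]) c
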